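/- Let f : M → N be a morphism of pointwise finite-dimensional Z^2-persistence modules with N free. Then ker f equals the preimage under the canonical map η_M : M → Colim M of the constant submodule Δ(colim ker f) ⊆ Colim M; i.e., ker f = [colim ker f]_M. -/

import Mathlib

open CategoryTheory Limits
open scoped Classical

/-- `ℤⁿ` with the product partial order. -/
abbrev Zn (n : ℕ) := Fin n → ℤ

noncomputable instance ZnCat (n : ℕ) : Category (Zn n) := Preorder.smallCategory _

/-- The category of `ℤⁿ`-persistence modules over a field `k`. -/
abbrev PersMod (n : ℕ) (k : Type) [Field k] :=
  @CategoryTheory.Functor (Zn n) (ZnCat n) (ModuleCat k) _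

variable {n : ℕ} {k : Type} [Field k]

/-- The free persistence module `F(z)` generated at grade `z`:
`F(z)_w = k` if `z ≤ w` and `0` otherwise, with identity structure maps. -/
noncomputable def Fgen (k : Type) [Field k] {n : ℕ} (z : Zn n) : PersMod n k where
  obj w := ModuleCat.of k (↥(if z ≤ w then (⊤ : Submodule k k) else ⊥))
  map {w w'} h := ModuleCat.ofHom (Submodule.inclusion (by
    by_cases hz : z ≤ w
    · simp [hz, hz.trans (leOfHom h)]
    · rw [if_neg hz]; exact fun x hx => (Submodule.mem_bot k).1 hx ▸ Submodule.zero_mem _))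
  map_id := by intros; rfl
  map_comp := by intros; rfl

/-- The finite rank free persistence module `⊕ᵢ F(r i)` with basis elements of grades `r i`,
realized with components `Πᵢ F(r i)_w ⊆ k`. -/
noncomputable def FreeMod (k : Type) [Field k] {n m : ℕ} (r : Fin m → Zn n) : PersMod n k where
  obj w := ModuleCat.of k (∀ i : Fin m, ↥(if r i ≤ w then (⊤ : Submodule k k) else ⊥))
  map {w w'} h := ModuleCat.ofHom (LinearMap.pi fun i =>
    (Submodule.inclusion (by
      by_cases hz : r i ≤ w
      · simp [hz, hz.trans (leOfHom h)]
      · rw [if_neg hz]; exact fun x hx => (Submodule.mem_bot k).1 hx ▸ Submodule.zero_mem _)).comp (LinearMap.proj i))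
  map_id := by intros; rfl
  map_comp := by intros; rfl

/-- For a morphism `f : M ⟶ N` of pointwise finite-dimensional `ℤ²`-persistence modules with
`N` free, the kernel of `f` equals the preimage under the canonical map `η_M : M → Colim M` of
the constant submodule `Δ(colim ker f) ⊆ Colim M`; pointwise: `x ∈ M_z` satisfies
`f_z x = 0` iff `η_M x` lies in the image of `colim (ker f)` in `colim M`. -/
theorem stmt_16 (M N : PersMod 2 k)
    (hM : ∀ z, FiniteDimensional k (M.obj z)) (hN : ∀ z, FiniteDimensional k (N.obj z))
    (hNfree : ∃ (m : ℕ) (r : Fin m → Zn 2), Nonempty (N ≅ FreeMod k r))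
    (f : M ⟶ N) (z : Zn 2) (x : M.obj z) :
    f.app z x = 0 ↔
      (Limits.colimit.ι M z) x ∈ Set.range (Limits.colimMap (Limits.kernel.ι f)) := by
  -- kernel elements map to kernel of f.app
  have hker : ∀ (w : Zn 2) (y : (kernel f).obj w), f.app w ((kernel.ι f).app w y) = 0 := by
    intro w y
    have h0 : (kernel.ι f).app w ≫ f.app w = 0 := by
      rw [← NatTrans.comp_app, kernel.condition]; rfl
    calc f.app w ((kernel.ι f).app w y) = ((kernel.ι f).app w ≫ f.app w) y := rfl
      _ = 0 := by rw [h0]; rfl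
  constructor
  · intro hx
    -- evaluate the kernel at z
    let E := (CategoryTheory.evaluation (Zn 2) (ModuleCat k)).obj z
    let e : E.obj (kernel f) ≅ kernel (E.map f) := PreservesKernel.iso E f
    let y0 : (kernel (E.map f) : ModuleCat k) :=
      (ModuleCat.kernelIsoKer (E.map f)).inv ⟨x, hx⟩
    let y : (kernel f).obj z := e.inv y0
    have hy : (kernel.ι f).app z y = x := by
      have h1 : e.hom ≫ kernel.ι (E.map f) = (kernel.ι f).app z := by
        show e.hom ≫ kernel.ι (E.map f) = E.map (kernel.ι f)
        rw [show e.hom = kernelComparison f E from PreservesKernel.iso_hom E f]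
        exact kernelComparison_comp_ι f E
      have h2 : kernel.ι (E.map f) y0 = x := by
        have := ModuleCat.kernelIsoKer_inv_kernel_ι (E.map f)
        calc kernel.ι (E.map f) y0
            = ((ModuleCat.kernelIsoKer (E.map f)).inv ≫ kernel.ι (E.map f)) ⟨x, hx⟩ := rfl
          _ = (LinearMap.ker (E.map f).hom).subtype ⟨x, hx⟩ := by rw [this]; rfl
          _ = x := rfl
      calc (kernel.ι f).app z y = (e.hom ≫ kernel.ι (E.map f)) (e.inv y0) := by rw [h1]
        _ = kernel.ι (E.map f) (e.hom (e.inv y0)) := rfl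
        _ = ((e.inv ≫ e.hom) ≫ kernel.ι (E.map f)) y0 := rfl
        _ = kernel.ι (E.map f) y0 := by rw [Iso.inv_hom_id, Category.id_comp]
        _ = x := h2
    refine ⟨colimit.ι (kernel f) z y, ?_⟩
    calc colimMap (kernel.ι f) (colimit.ι (kernel f) z y)
        = (colimit.ι (kernel f) z ≫ colimMap (kernel.ι f)) y := rfl
      _ = ((kernel.ι f).app z ≫ colimit.ι M z) y := by rw [ι_colimMap]
      _ = colimit.ι M z ((kernel.ι f).app z y) := rfl
      _ = colimit.ι M z x := by rw [hy]
  · rintro ⟨c, hc⟩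
    obtain ⟨w, y, rfl⟩ := Concrete.colimit_exists_rep (kernel f) c
    have hc' : colimit.ι M w ((kernel.ι f).app w y) = colimit.ι M z x := by
      calc colimit.ι M w ((kernel.ι f).app w y)
          = ((kernel.ι f).app w ≫ colimit.ι M w) y := rfl
        _ = (colimit.ι (kernel f) w ≫ colimMap (kernel.ι f)) y := by rw [ι_colimMap]
        _ = colimit.ι M z x := hc
    obtain ⟨u, g, h, hgh⟩ := Concrete.colimit_exists_of_rep_eq M _ _ hc'
    -- push through f
    have h1 : N.map h (f.app z x) = 0 := by
      calc N.map h (f.app z x) = (f.app z ≫ N.map h) x := rfl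
        _ = (M.map h ≫ f.app u) x := by rw [f.naturality]
        _ = f.app u (M.map h x) := rfl
        _ = f.app u (M.map g ((kernel.ι f).app w y)) := congrArg (f.app u) hgh.symm
        _ = (M.map g ≫ f.app u) ((kernel.ι f).app w y) := rfl
        _ = (f.app w ≫ N.map g) ((kernel.ι f).app w y) := by rw [f.naturality]
        _ = ((kernel.ι f).app w ≫ f.app w ≫ N.map g) y := rfl
        _ = N.map g (f.app w ((kernel.ι f).app w y)) := rfl
        _ = 0 := by rw [hker]; exact map_zero _
    -- N.map h is injective since N is free
    obtain ⟨m, r, ⟨iso⟩⟩ := hNfree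
    have hF : Function.Injective ((FreeMod k r).map h) := by
      intro a b hab
      funext i
      have hv := congrArg Subtype.val (congrFun hab i)
      have ha : ((((FreeMod k r).map h) a) i : k) = (a i : k) := rfl
      have hb : ((((FreeMod k r).map h) b) i : k) = (b i : k) := rfl
      exact Subtype.ext ((ha.symm.trans hv).trans hb)
    have hNat : N.map h ≫ iso.hom.app u = iso.hom.app z ≫ (FreeMod k r).map h :=
      iso.hom.naturality h
    have h2 : iso.hom.app z (f.app z x) = 0 := by
      apply hF
      calc (FreeMod k r).map h (iso.hom.app z (f.app z x))
          = (N.map h ≫ iso.hom.app u) (f.app z x) := by rw [hNat]; rfl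
        _ = iso.hom.app u (N.map h (f.app z x)) := rfl
        _ = 0 := by rw [h1]; exact map_zero _
        _ = (FreeMod k r).map h 0 := (map_zero _).symm
    calc f.app z x = (iso.hom.app z ≫ iso.inv.app z) (f.app z x) := by
          rw [Iso.hom_inv_id_app]; rfl
      _ = iso.inv.app z (iso.hom.app z (f.app z x)) := rfl
      _ = 0 := by rw [h2]; exact map_zero _
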